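/- arXiv:1810.12699 — 5 statements merged into one kernel-verified Lean document; each statement's English description precedes it below -/
import Mathlib

section
/- Let α ∈ (0,2) and let p be a symmetric transition rate with p(1) > 0 and p ∈ DAN(α). Then there exists a constant κ₂ ∈ (0,∞) such that for every n ∈ ℕ there is a non-identically-zero function f : Λ_n → ℝ with ∑_{x∈Λ_n} f(x) = 0 and (1/2) ∑_{x∈Λ_n} ∑_{y∈Λ_n} p(y-x) (f(y)-f(x))² ≤ κ₂ (2n+1)^{-α} ∑_{x∈Λ_n} f(x)². Equivalently, the spectral gap λ_n of the random walk on Λ_n with jump rates r(x,y) = p(y-x) satisfies λ_n ≤ κ₂ (2n+1)^{-α}. -/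
open Finset Filter Topology

/-- A symmetric transition rate: `p(0) = 0`, `p` symmetric, summable, nonnegative
and not identically zero. -/
def IsSymTransitionRate (p : ℤ → ℝ) : Prop :=
  (∀ z : ℤ, 0 ≤ p z) ∧ p 0 = 0 ∧ (∀ z : ℤ, p z = p (-z)) ∧ Summable p ∧ (∃ z : ℤ, p z ≠ 0)

/-- `p` is in the domain of normal attraction of an `α`-stable law. -/
def MemDAN (p : ℤ → ℝ) (α : ℝ) : Prop :=
  ∃ c : ℝ, 0 < c ∧
    Tendsto (fun x : ℕ => (x : ℝ) ^ α * ∑' k : ℕ, p ((x : ℤ) + (k : ℤ)))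
      atTop (nhds c)


lemma aux_sum_Icc_int (F : ℤ → ℝ) (m : ℕ) :
    ∑ z ∈ Icc (1:ℤ) (m:ℤ), F z = ∑ k ∈ range m, F ((k:ℤ)+1) := by
  induction m with
  | zero => simp
  | succ m ih =>
    have h : Icc (1:ℤ) ((m+1:ℕ):ℤ) = insert ((m:ℤ)+1) (Icc (1:ℤ) (m:ℤ)) := by
      ext z; simp [Finset.mem_Icc, Finset.mem_insert]; omega
    rw [h, Finset.sum_insert (by simp), ih, Finset.sum_range_succ]
    ring

lemma aux_sq_sum (k : ℕ) : ((k:ℝ)+1)^2 = ∑ j ∈ range (k+1), (2*(j:ℝ)+1) := by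
  induction k with
  | zero => simp
  | succ k ih => rw [Finset.sum_range_succ, ← ih]; push_cast; ring

lemma aux_sum_sq (n : ℕ) :
    ∑ k ∈ range n, ((k:ℝ)+1)^2 = (n:ℝ)*((n:ℝ)+1)*(2*(n:ℝ)+1)/6 := by
  induction n with
  | zero => simp
  | succ n ih => rw [Finset.sum_range_succ, ih]; push_cast; ring

lemma aux_bernoulli {s : ℝ} (hs0 : 0 < s) (hs1 : s ≤ 1) (j : ℕ) :
    s * ((j:ℝ)+1) ^ (s-1) ≤ ((j:ℝ)+1) ^ s - (j:ℝ) ^ s := by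
  set b : ℝ := (j:ℝ) + 1 with hb
  have hbj : (0:ℝ) ≤ (j:ℝ) := Nat.cast_nonneg j
  have hb1 : 1 ≤ b := by simp only [hb]; linarith
  have hb0 : 0 < b := by linarith
  have hj : (j:ℝ) = b - 1 := by ring
  have key : (1 + (-1/b)) ^ s ≤ 1 + s * (-1/b) :=
    rpow_one_add_le_one_add_mul_self (by
      have h4 : 1/b ≤ 1 := by rw [div_le_one hb0]; exact hb1
      have h5 : (-1:ℝ)/b = -(1/b) := by ring
      linarith) hs0.le hs1
  have h1 : (1:ℝ) + (-1/b) = (b-1)/b := by field_simp; ring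
  have h2 : (b-1)^s = ((b-1)/b)^s * b^s := by
    rw [← Real.mul_rpow (by
      apply div_nonneg _ hb0.le; linarith) hb0.le, div_mul_cancel₀]
    exact hb0.ne'
  have hbs : 0 ≤ b ^ s := Real.rpow_nonneg hb0.le s
  have hmul : (1 + -1/b)^s * b^s ≤ (1 + s * (-1/b)) * b^s :=
    mul_le_mul_of_nonneg_right key hbs
  have h3 : (1 + s * (-1/b)) * b^s = b^s - s * b^(s-1) := by
    rw [Real.rpow_sub hb0, Real.rpow_one]
    field_simp
    ring
  rw [hj, h2, ← h1]
  linarith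

lemma aux_pow_sum {α : ℝ} (hα2 : α < 2) (m : ℕ) :
    ∑ j ∈ range m, ((j:ℝ)+1) ^ (1-α) ≤ (max 1 (1/(2-α))) * (m:ℝ) ^ (2-α) := by
  have hs0 : (0:ℝ) < 2 - α := by linarith
  have hmax1 : (1:ℝ) ≤ max 1 (1/(2-α)) := le_max_left _ _
  rcases Nat.eq_zero_or_pos m with rfl | hm
  · simp [Real.zero_rpow hs0.ne']
  have hm0 : (0:ℝ) < m := by exact_mod_cast hm
  rcases le_or_gt α 1 with h1 | h1
  · have step : ∑ j ∈ range m, ((j:ℝ)+1) ^ (1-α) ≤ (m:ℝ) * (m:ℝ) ^ (1-α) := by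
      calc ∑ j ∈ range m, ((j:ℝ)+1) ^ (1-α)
          ≤ ∑ _j ∈ range m, (m:ℝ) ^ (1-α) := by
            apply Finset.sum_le_sum
            intro j hj
            apply Real.rpow_le_rpow (by positivity) _ (by linarith)
            have := Finset.mem_range.mp hj
            have : (j:ℝ) + 1 ≤ m := by exact_mod_cast this
            exact this
        _ = (m:ℝ) * (m:ℝ) ^ (1-α) := by
            rw [Finset.sum_const, Finset.card_range, nsmul_eq_mul]
    have heq : (m:ℝ) * (m:ℝ) ^ (1-α) = (m:ℝ) ^ (2-α) := by
      rw [← Real.rpow_one_add' hm0.le (by linarith)]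
      ring_nf
    rw [heq] at step
    calc ∑ j ∈ range m, ((j:ℝ)+1) ^ (1-α) ≤ (m:ℝ) ^ (2-α) := step
      _ ≤ (max 1 (1/(2-α))) * (m:ℝ) ^ (2-α) := by
          nlinarith [Real.rpow_nonneg hm0.le (2-α)]
  · set s : ℝ := 2 - α with hsdef
    have hs1 : s ≤ 1 := by rw [hsdef]; linarith
    have h1α : 1 - α = s - 1 := by rw [hsdef]; ring
    have key : ∀ j ∈ range m, ((j:ℝ)+1) ^ (1-α) ≤ (1/s) * (((j:ℝ)+1)^s - (j:ℝ)^s) := by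
      intro j _
      have hber := aux_bernoulli hs0 hs1 j
      rw [h1α, one_div, inv_mul_eq_div, le_div_iff₀ hs0]
      nlinarith [hber]
    calc ∑ j ∈ range m, ((j:ℝ)+1) ^ (1-α)
        ≤ ∑ j ∈ range m, (1/s) * (((j:ℝ)+1)^s - (j:ℝ)^s) := Finset.sum_le_sum key
      _ = (1/s) * ((m:ℝ)^s - (0:ℝ)^s) := by
          rw [← Finset.mul_sum]
          congr 1
          have := Finset.sum_range_sub (f := fun k : ℕ => (k:ℝ)^s) m
          simpa using this
      _ = (1/s) * (m:ℝ)^s := by rw [Real.zero_rpow hs0.ne']; ring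
      _ ≤ (max 1 (1/(2-α))) * (m:ℝ) ^ (2-α) := by
          apply mul_le_mul_of_nonneg_right (le_max_right _ _) (Real.rpow_nonneg hm0.le _)

theorem spectral_gap_upper_bound
    (α : ℝ) (hα0 : 0 < α) (hα2 : α < 2)
    (p : ℤ → ℝ) (hp : IsSymTransitionRate p) (hp1 : 0 < p 1)
    (hDAN : MemDAN p α) :
    ∃ κ₂ : ℝ, 0 < κ₂ ∧ ∀ n : ℕ, 1 ≤ n → ∃ f : ℤ → ℝ,
      (∃ x ∈ Finset.Icc (-(n : ℤ)) n, f x ≠ 0) ∧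
      (∑ x ∈ Finset.Icc (-(n : ℤ)) n, f x) = 0 ∧
      (1 / 2) * ∑ x ∈ Finset.Icc (-(n : ℤ)) n, ∑ y ∈ Finset.Icc (-(n : ℤ)) n,
          p (y - x) * (f y - f x) ^ 2 ≤
        κ₂ * (2 * (n : ℝ) + 1) ^ (-α) * ∑ x ∈ Finset.Icc (-(n : ℤ)) n, (f x) ^ 2 := by

  obtain ⟨hnn, hzero, hsymm, hsum, -⟩ := hp
  obtain ⟨c, hc, htend⟩ := hDAN
  set T : ℕ → ℝ := fun x => ∑' k : ℕ, p ((x:ℤ) + (k:ℤ)) with hTdef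
  have hsummT : ∀ x : ℕ, Summable (fun k : ℕ => p ((x:ℤ) + (k:ℤ))) := by
    intro x
    apply hsum.comp_injective
    intro a b hab
    simpa using hab
  have hTnn : ∀ x, 0 ≤ T x := fun x => tsum_nonneg (fun k => hnn _)
  obtain ⟨C0, hC0⟩ := htend.bddAbove_range
  set C : ℝ := max C0 1 with hCdef
  have hCpos : (0:ℝ) < C := lt_of_lt_of_le one_pos (le_max_right _ _)
  have hCb : ∀ x : ℕ, (x:ℝ)^α * T x ≤ C := fun x =>
    le_trans (hC0 ⟨x, rfl⟩) (le_max_left _ _)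
  have hTle : ∀ x : ℕ, 1 ≤ x → T x ≤ C * (x:ℝ) ^ (-α) := by
    intro x hx
    have hx0 : (0:ℝ) < x := by exact_mod_cast hx
    have hpow : (0:ℝ) < (x:ℝ)^α := Real.rpow_pos_of_pos hx0 α
    have h := hCb x
    rw [mul_comm] at h
    rw [Real.rpow_neg hx0.le]
    calc T x ≤ C / (x:ℝ)^α := (le_div_iff₀ hpow).mpr h
      _ = C * ((x:ℝ)^α)⁻¹ := by ring
  set C₂ : ℝ := max 1 (1/(2-α)) with hC2def
  have hC2pos : (0:ℝ) < C₂ := lt_of_lt_of_le one_pos (le_max_left _ _)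
  refine ⟨108 * C * C₂, by positivity, ?_⟩
  intro n hn
  have hn1 : (1:ℝ) ≤ (n:ℝ) := by exact_mod_cast hn
  set N : ℝ := 2*(n:ℝ)+1 with hNdef
  have hN0 : (0:ℝ) < N := by rw [hNdef]; linarith
  set m' : ℕ := 2*n with hm'def
  set g : ℤ → ℝ := fun z => p z * (z:ℝ)^2 with hgdef
  have hgnn : ∀ z, 0 ≤ g z := fun z => mul_nonneg (hnn z) (sq_nonneg _)
  set S : ℝ := ∑ z ∈ Icc (-(m':ℤ)) (m':ℤ), g z with hSdef
  refine ⟨fun z => (z:ℝ), ⟨1, by simp [Finset.mem_Icc]; omega, by norm_num⟩, ?_, ?_⟩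
  · -- sum of f is zero
    have himg : (Icc (-(n:ℤ)) (n:ℤ)).image (fun z => -z) = Icc (-(n:ℤ)) (n:ℤ) := by
      ext z
      simp only [Finset.mem_image, Finset.mem_Icc]
      constructor
      · rintro ⟨a, ha, rfl⟩; omega
      · intro hz; exact ⟨-z, by omega, by ring⟩
    have hinj : ∀ a ∈ Icc (-(n:ℤ)) (n:ℤ), ∀ b ∈ Icc (-(n:ℤ)) (n:ℤ),
        (fun z:ℤ => -z) a = (fun z:ℤ => -z) b → a = b := by
      intro a _ b _ h; simpa using h
    have h1 : ∑ x ∈ Icc (-(n:ℤ)) (n:ℤ), ((x:ℤ):ℝ) =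
        ∑ x ∈ Icc (-(n:ℤ)) (n:ℤ), ((-x:ℤ):ℝ) := by
      conv_lhs => rw [← himg]
      exact Finset.sum_image hinj
    have h2 : ∑ x ∈ Icc (-(n:ℤ)) (n:ℤ), ((-x:ℤ):ℝ) =
        - ∑ x ∈ Icc (-(n:ℤ)) (n:ℤ), ((x:ℤ):ℝ) := by
      rw [← Finset.sum_neg_distrib]
      apply Finset.sum_congr rfl
      intro x _; push_cast; ring
    have := h1.trans h2
    linarith
  · -- main inequality
    -- Step A
    have h_inner : ∀ x ∈ Icc (-(n:ℤ)) (n:ℤ),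
        ∑ y ∈ Icc (-(n:ℤ)) (n:ℤ), p (y-x) * ((y:ℝ)-(x:ℝ))^2 ≤ S := by
      intro x hx
      rw [Finset.mem_Icc] at hx
      have hterm : ∀ y, p (y-x) * ((y:ℝ)-(x:ℝ))^2 = g (y - x) := by
        intro y; rw [hgdef]; push_cast; ring
      rw [Finset.sum_congr rfl (fun y _ => hterm y)]
      have hinj : ∀ a ∈ Icc (-(n:ℤ)) (n:ℤ), ∀ b ∈ Icc (-(n:ℤ)) (n:ℤ),
          (fun y:ℤ => y - x) a = (fun y:ℤ => y - x) b → a = b := by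
        intro a _ b _ h; simpa using h
      have him : (Icc (-(n:ℤ)) (n:ℤ)).image (fun y => y - x) ⊆ Icc (-(m':ℤ)) (m':ℤ) := by
        intro z hz
        simp only [Finset.mem_image, Finset.mem_Icc] at hz ⊢
        obtain ⟨a, ha, rfl⟩ := hz
        simp only [hm'def]
        push_cast
        omega
      calc ∑ y ∈ Icc (-(n:ℤ)) (n:ℤ), g (y - x)
          = ∑ z ∈ (Icc (-(n:ℤ)) (n:ℤ)).image (fun y => y - x), g z :=
            (Finset.sum_image hinj).symm
        _ ≤ S := Finset.sum_le_sum_of_subset_of_nonneg him (fun z _ _ => hgnn z)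
    have hcard : ((Icc (-(n:ℤ)) (n:ℤ)).card : ℝ) = N := by
      rw [Int.card_Icc, hNdef]
      have : (n:ℤ) + 1 - (-(n:ℤ)) = 2*(n:ℤ)+1 := by ring
      rw [this]
      have h2 : (2*(n:ℤ)+1).toNat = 2*n+1 := by omega
      rw [h2]
      push_cast
      ring
    have hA : ∑ x ∈ Icc (-(n:ℤ)) (n:ℤ), ∑ y ∈ Icc (-(n:ℤ)) (n:ℤ),
        p (y-x) * ((y:ℝ)-(x:ℝ))^2 ≤ N * S := by
      calc ∑ x ∈ Icc (-(n:ℤ)) (n:ℤ), ∑ y ∈ Icc (-(n:ℤ)) (n:ℤ),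
            p (y-x) * ((y:ℝ)-(x:ℝ))^2
          ≤ ∑ _x ∈ Icc (-(n:ℤ)) (n:ℤ), S := Finset.sum_le_sum h_inner
        _ = ((Icc (-(n:ℤ)) (n:ℤ)).card : ℝ) * S := by
            rw [Finset.sum_const, nsmul_eq_mul]
        _ = N * S := by rw [hcard]
    -- Step B : S = 2 * Bs
    set Bs : ℝ := ∑ k ∈ range m', p ((k:ℤ)+1) * ((k:ℝ)+1)^2 with hBsdef
    have hB : S = 2 * Bs := by
      have hsplit : Icc (-(m':ℤ)) (m':ℤ) = Icc (-(m':ℤ)) (-1) ∪ Icc (0:ℤ) (m':ℤ) := by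
        ext z; simp only [Finset.mem_Icc, Finset.mem_union]; omega
      have hdisj : Disjoint (Icc (-(m':ℤ)) (-1)) (Icc (0:ℤ) (m':ℤ)) := by
        rw [Finset.disjoint_left]
        intro z h1 h2
        rw [Finset.mem_Icc] at h1 h2
        omega
      have himgneg : (Icc (1:ℤ) (m':ℤ)).image (fun z => -z) = Icc (-(m':ℤ)) (-1) := by
        ext z
        simp only [Finset.mem_image, Finset.mem_Icc]
        constructor
        · rintro ⟨a, ha, rfl⟩; omega
        · intro hz; exact ⟨-z, by omega, by ring⟩
      have hneg : ∑ z ∈ Icc (-(m':ℤ)) (-1:ℤ), g z = ∑ z ∈ Icc (1:ℤ) (m':ℤ), g z := by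
        rw [← himgneg, Finset.sum_image (by intro a _ b _ h; simpa using h)]
        apply Finset.sum_congr rfl
        intro z _
        rw [hgdef]
        simp only
        rw [← hsymm z]
        push_cast
        ring
      have hposs : ∑ z ∈ Icc (0:ℤ) (m':ℤ), g z = ∑ z ∈ Icc (1:ℤ) (m':ℤ), g z := by
        have h0 : Icc (0:ℤ) (m':ℤ) = insert (0:ℤ) (Icc (1:ℤ) (m':ℤ)) := by
          ext z; simp only [Finset.mem_Icc, Finset.mem_insert]; omega
        rw [h0, Finset.sum_insert (by simp)]
        have : g 0 = 0 := by rw [hgdef]; simp [hzero]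
        rw [this, zero_add]
      have hr : ∑ z ∈ Icc (1:ℤ) (m':ℤ), g z = Bs := by
        rw [aux_sum_Icc_int g m', hBsdef]
        apply Finset.sum_congr rfl
        intro k _
        rw [hgdef]
        push_cast
        ring
      rw [hSdef, hsplit, Finset.sum_union hdisj, hneg, hposs, hr]
      ring
    -- Step C : Bs ≤ 2*C*C₂*(m')^(2-α)
    have hCstep : Bs ≤ 2*C*C₂ * (m':ℝ)^(2-α) := by
      have h1 : Bs = ∑ k ∈ range m', ∑ j ∈ range (k+1), p ((k:ℤ)+1) * (2*(j:ℝ)+1) := by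
        rw [hBsdef]
        apply Finset.sum_congr rfl
        intro k _
        rw [aux_sq_sum k, Finset.mul_sum]
      have h2 : ∑ k ∈ range m', ∑ j ∈ range (k+1), p ((k:ℤ)+1) * (2*(j:ℝ)+1)
          = ∑ j ∈ range m', ∑ k ∈ Ico j m', p ((k:ℤ)+1) * (2*(j:ℝ)+1) := by
        apply Finset.sum_comm'
        intro k j
        simp only [Finset.mem_range, Finset.mem_Ico]
        omega
      have htail : ∀ j : ℕ, ∑ k ∈ Ico j m', p ((k:ℤ)+1) ≤ T (j+1) := by
        intro j
        rw [Finset.sum_Ico_eq_sum_range]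
        have heqt : ∀ i ∈ range (m' - j), p (((j + i : ℕ):ℤ)+1) =
            p (((j+1:ℕ):ℤ) + (i:ℤ)) := by
          intro i _
          congr 1
          push_cast
          ring
        rw [Finset.sum_congr rfl heqt]
        exact Summable.sum_le_tsum _ (fun i _ => hnn _) (hsummT (j+1))
      have h3 : ∑ j ∈ range m', ∑ k ∈ Ico j m', p ((k:ℤ)+1) * (2*(j:ℝ)+1)
          ≤ ∑ j ∈ range m', 2*C * ((j:ℝ)+1)^(1-α) := by
        apply Finset.sum_le_sum
        intro j _
        have hfac : ∑ k ∈ Ico j m', p ((k:ℤ)+1) * (2*(j:ℝ)+1)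
            = (2*(j:ℝ)+1) * ∑ k ∈ Ico j m', p ((k:ℤ)+1) := by
          rw [Finset.mul_sum]
          apply Finset.sum_congr rfl
          intro k _; ring
        rw [hfac]
        have hjpos : (0:ℝ) < (j:ℝ)+1 := by positivity
        have hTj : T (j+1) ≤ C * ((j:ℝ)+1)^(-α) := by
          have := hTle (j+1) (by omega)
          have hcast : (((j+1:ℕ)):ℝ) = (j:ℝ)+1 := by push_cast; ring
          rwa [hcast] at this
        have hsum_nn : 0 ≤ ∑ k ∈ Ico j m', p ((k:ℤ)+1) :=
          Finset.sum_nonneg (fun k _ => hnn _)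
        have step : (2*(j:ℝ)+1) * ∑ k ∈ Ico j m', p ((k:ℤ)+1)
            ≤ (2*((j:ℝ)+1)) * (C * ((j:ℝ)+1)^(-α)) := by
          apply mul_le_mul (by linarith) ((htail j).trans hTj) hsum_nn (by positivity)
        have heq : (2*((j:ℝ)+1)) * (C * ((j:ℝ)+1)^(-α)) = 2*C * ((j:ℝ)+1)^(1-α) := by
          rw [show (1:ℝ) - α = 1 + (-α) by ring, Real.rpow_add hjpos, Real.rpow_one]
          ring
        linarith [heq ▸ step]
      have h4 : ∑ j ∈ range m', 2*C * ((j:ℝ)+1)^(1-α) ≤ 2*C * (C₂ * (m':ℝ)^(2-α)) := by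
        rw [← Finset.mul_sum]
        apply mul_le_mul_of_nonneg_left _ (by positivity)
        rw [hC2def]
        exact aux_pow_sum hα2 m'
      calc Bs = ∑ k ∈ range m', ∑ j ∈ range (k+1), p ((k:ℤ)+1) * (2*(j:ℝ)+1) := h1
        _ = ∑ j ∈ range m', ∑ k ∈ Ico j m', p ((k:ℤ)+1) * (2*(j:ℝ)+1) := h2
        _ ≤ ∑ j ∈ range m', 2*C * ((j:ℝ)+1)^(1-α) := h3
        _ ≤ 2*C * (C₂ * (m':ℝ)^(2-α)) := h4
        _ = 2*C*C₂ * (m':ℝ)^(2-α) := by ring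
    -- lower bound on sum of squares
    have hsq : N^3/54 ≤ ∑ x ∈ Icc (-(n:ℤ)) (n:ℤ), ((x:ℤ):ℝ)^2 := by
      have hsub : Icc (1:ℤ) (n:ℤ) ⊆ Icc (-(n:ℤ)) (n:ℤ) := by
        intro z hz; rw [Finset.mem_Icc] at *; omega
      have h1 : ∑ x ∈ Icc (1:ℤ) (n:ℤ), ((x:ℤ):ℝ)^2 ≤
          ∑ x ∈ Icc (-(n:ℤ)) (n:ℤ), ((x:ℤ):ℝ)^2 :=
        Finset.sum_le_sum_of_subset_of_nonneg hsub (fun z _ _ => sq_nonneg _)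
      have h2 : ∑ x ∈ Icc (1:ℤ) (n:ℤ), ((x:ℤ):ℝ)^2 = ∑ k ∈ range n, ((k:ℝ)+1)^2 := by
        rw [aux_sum_Icc_int (fun z => ((z:ℤ):ℝ)^2) n]
        apply Finset.sum_congr rfl
        intro k _; push_cast; ring
      rw [h2, aux_sum_sq n] at h1
      have h3 : N^3/54 ≤ (n:ℝ)*((n:ℝ)+1)*(2*(n:ℝ)+1)/6 := by
        rw [hNdef]
        have hn0 : (0:ℝ) ≤ (n:ℝ) := by positivity
        have h5 : 0 ≤ 5*(n:ℝ)^2 + 5*(n:ℝ) - 1 := by nlinarith [hn1]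
        nlinarith [mul_nonneg (by linarith : (0:ℝ) ≤ 2*(n:ℝ)+1) h5]
      linarith
    -- assembly
    have hm'cast : (m':ℝ) = 2*(n:ℝ) := by rw [hm'def]; push_cast; ring
    have hm'le : (m':ℝ)^(2-α) ≤ N^(2-α) := by
      apply Real.rpow_le_rpow (by rw [hm'cast]; linarith) _ (by linarith)
      rw [hm'cast, hNdef]; linarith
    have hSle : S ≤ 4*C*C₂ * N^(2-α) := by
      rw [hB]
      have := hCstep.trans (by
        apply mul_le_mul_of_nonneg_left hm'le (by positivity) :
          2*C*C₂ * (m':ℝ)^(2-α) ≤ 2*C*C₂ * N^(2-α))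
      linarith
    have hNpow : N * N^(2-α) = N^(-α) * N^3 := by
      have e1 : N * N^(2-α) = N^(1+(2-α)) := by
        rw [Real.rpow_add hN0, Real.rpow_one]
      have e2 : N^(-α) * N^((3:ℕ):ℝ) = N^(-α+((3:ℕ):ℝ)) := (Real.rpow_add hN0 _ _).symm
      rw [e1, ← Real.rpow_natCast N 3, e2]
      congr 1
      push_cast
      ring
    have hDD : ∑ x ∈ Icc (-(n:ℤ)) (n:ℤ), ∑ y ∈ Icc (-(n:ℤ)) (n:ℤ),
        p (y-x) * ((y:ℝ)-(x:ℝ))^2 ≤ 4*C*C₂ * (N^(-α) * N^3) := by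
      calc ∑ x ∈ Icc (-(n:ℤ)) (n:ℤ), ∑ y ∈ Icc (-(n:ℤ)) (n:ℤ),
            p (y-x) * ((y:ℝ)-(x:ℝ))^2 ≤ N * S := hA
        _ ≤ N * (4*C*C₂ * N^(2-α)) := by
            apply mul_le_mul_of_nonneg_left hSle hN0.le
        _ = 4*C*C₂ * (N * N^(2-α)) := by ring
        _ = 4*C*C₂ * (N^(-α) * N^3) := by rw [hNpow]
    have hNα : (0:ℝ) < N^(-α) := Real.rpow_pos_of_pos hN0 _
    have hfinal : 108*C*C₂ * N^(-α) * (N^3/54) ≤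
        108*C*C₂ * N^(-α) * ∑ x ∈ Icc (-(n:ℤ)) (n:ℤ), ((x:ℤ):ℝ)^2 := by
      apply mul_le_mul_of_nonneg_left hsq (by positivity)
    show (1/2) * ∑ x ∈ Icc (-(n:ℤ)) (n:ℤ), ∑ y ∈ Icc (-(n:ℤ)) (n:ℤ),
          p (y-x) * ((y:ℝ)-(x:ℝ))^2 ≤
        108*C*C₂ * (2*(n:ℝ)+1)^(-α) * ∑ x ∈ Icc (-(n:ℤ)) (n:ℤ), ((x:ℤ):ℝ)^2
    calc (1/2) * ∑ x ∈ Icc (-(n:ℤ)) (n:ℤ), ∑ y ∈ Icc (-(n:ℤ)) (n:ℤ),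
          p (y-x) * ((y:ℝ)-(x:ℝ))^2
        ≤ (1/2) * (4*C*C₂ * (N^(-α) * N^3)) := mul_le_mul_of_nonneg_left hDD (by norm_num)
      _ = 108*C*C₂ * N^(-α) * (N^3/54) := by ring
      _ ≤ 108*C*C₂ * N^(-α) * ∑ x ∈ Icc (-(n:ℤ)) (n:ℤ), ((x:ℤ):ℝ)^2 := hfinal
      _ = 108 * C * C₂ * (2*(n:ℝ)+1)^(-α) * ∑ x ∈ Icc (-(n:ℤ)) (n:ℤ), ((x:ℤ):ℝ)^2 := by
          rw [hNdef]
end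

section
/- Let α ∈ (0,2) and let p be a symmetric transition rate with p(1) > 0 and p ∈ DAN(α). Then there exists a constant κ₂^ex ∈ (0,∞) such that for every n ∈ ℕ and every ℓ ∈ {1,...,2n} there is a non-identically-zero function f : Ω_{n,ℓ}^ex → ℝ with ∑_{η∈Ω_{n,ℓ}^ex} f(η) = 0 and (1/2) ∑_{η∈Ω_{n,ℓ}^ex} ∑_{x,y∈Λ_n} p(y-x) η_x (1-η_y) (f(η^{x,y}) - f(η))² ≤ κ₂^ex (2n+1)^{-α} ∑_{η∈Ω_{n,ℓ}^ex} f(η)². Equivalently, the spectral gap of the exclusion process with transition rate p on Ω_{n,ℓ}^ex satisfies λ_{n,ℓ}^ex ≤ κ₂^ex (2n+1)^{-α}. -/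
open Finset Filter Topology

/-- Exclusion configurations on `Λ_n = {-n,…,n}` with `ℓ` particles, encoded as the
set of occupied sites: subsets of `Λ_n` of cardinality `ℓ`. -/
noncomputable def exConfigs (n ℓ : ℕ) : Finset (Finset ℤ) :=
  Finset.powersetCard ℓ (Finset.Icc (-(n : ℤ)) n)

/-- The configuration `η^{x,y}` when `x` is occupied and `y` is empty: the particle
at `x` moves to `y`. -/
def exSwap (η : Finset ℤ) (x y : ℤ) : Finset ℤ := insert y (η.erase x)

lemma sum_rpow_le (α : ℝ) (hα0 : 0 < α) (hα2 : α < 2) (m : ℕ) (hm : 1 ≤ m) :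
    ∑ x ∈ Icc 1 m, (x:ℝ)^(1-α) ≤ 4/(2-α) * (m:ℝ)^(2-α) := by
  have h2α : (0:ℝ) < 2 - α := by linarith
  have hm1 : (1:ℝ) ≤ (m:ℝ) := by exact_mod_cast hm
  have hmr : (1:ℝ) ≤ (m:ℝ)^(2-α) := Real.one_le_rpow hm1 h2α.le
  rcases le_or_gt α 1 with h1 | h1
  · -- monotone case
    have hmono : MonotoneOn (fun t : ℝ => t ^ (1-α)) (Set.Icc ((0:ℕ):ℝ) ((m+1:ℕ):ℝ)) := by
      intro a ha b hb hab
      exact Real.rpow_le_rpow (by exact_mod_cast ha.1) hab (by linarith)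
    have key := MonotoneOn.sum_le_integral_Ico (f := fun t : ℝ => t ^ (1-α))
      (Nat.zero_le (m+1)) hmono
    have hsub : ∑ x ∈ Icc 1 m, (x:ℝ)^(1-α) ≤ ∑ x ∈ Finset.Ico 0 (m+1), ((x:ℕ):ℝ)^(1-α) := by
      apply Finset.sum_le_sum_of_subset_of_nonneg
      · intro x hx; simp only [mem_Icc, mem_Ico] at *; omega
      · intro x _ _; positivity
    have hint : (∫ t in ((0:ℕ):ℝ)..((m+1:ℕ):ℝ), t ^ (1-α)) =
        ((m+1:ℕ):ℝ)^(2-α) / (2-α) := by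
      rw [integral_rpow (Or.inl (by linarith))]
      rw [Nat.cast_zero, Real.zero_rpow (by linarith)]
      ring_nf
    calc ∑ x ∈ Icc 1 m, (x:ℝ)^(1-α) ≤ ((m+1:ℕ):ℝ)^(2-α) / (2-α) := by
          rw [← hint]; exact hsub.trans key
      _ ≤ 4/(2-α) * (m:ℝ)^(2-α) := by
          have h1 : ((m+1:ℕ):ℝ)^(2-α) ≤ (2*(m:ℝ))^(2-α) := by
            apply Real.rpow_le_rpow (by positivity) _ h2α.le
            push_cast; linarith
          have h2 : (2*(m:ℝ))^(2-α) = 2^(2-α) * (m:ℝ)^(2-α) :=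
            Real.mul_rpow (by norm_num) (by positivity)
          have h3 : (2:ℝ)^(2-α) ≤ 4 := by
            calc (2:ℝ)^(2-α) ≤ 2^(2:ℝ) :=
                  Real.rpow_le_rpow_of_exponent_le (by norm_num) (by linarith)
              _ = 4 := by
                  rw [show (2:ℝ) = ((2:ℕ):ℝ) by norm_num, Real.rpow_natCast]; norm_num
          have h4 : ((m+1:ℕ):ℝ)^(2-α) ≤ 4 * (m:ℝ)^(2-α) := by
            calc ((m+1:ℕ):ℝ)^(2-α) ≤ 2^(2-α) * (m:ℝ)^(2-α) := h1.trans_eq h2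
              _ ≤ 4 * (m:ℝ)^(2-α) := by
                nlinarith [Real.rpow_nonneg (show (0:ℝ) ≤ m by positivity) (2-α)]
          calc ((m+1:ℕ):ℝ)^(2-α)/(2-α) ≤ (4 * (m:ℝ)^(2-α))/(2-α) := by gcongr
            _ = 4/(2-α) * (m:ℝ)^(2-α) := by ring
  · -- antitone case
    have hanti : AntitoneOn (fun t : ℝ => t ^ (1-α)) (Set.Icc ((1:ℕ):ℝ) ((m:ℕ):ℝ)) := by
      intro a ha b hb hab
      exact Real.rpow_le_rpow_of_nonpos (by simpa using lt_of_lt_of_le one_pos (by exact_mod_cast ha.1)) hab (by linarith)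
    have key := AntitoneOn.sum_le_integral_Ico (f := fun t : ℝ => t ^ (1-α)) hm hanti
    have hint : (∫ t in ((1:ℕ):ℝ)..((m:ℕ):ℝ), t ^ (1-α)) =
        ((m:ℝ)^(2-α) - 1) / (2-α) := by
      rw [integral_rpow (Or.inl (by linarith))]
      rw [Nat.cast_one, Real.one_rpow]
      ring_nf
    have hsplit : ∑ x ∈ Icc 1 m, (x:ℝ)^(1-α)
        = 1 + ∑ i ∈ Finset.Ico 1 m, ((i+1:ℕ):ℝ)^(1-α) := by
      have : ∑ x ∈ Icc 1 m, (x:ℝ)^(1-α) = ∑ x ∈ Finset.Ico 1 (m+1), (x:ℝ)^(1-α) := by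
        rw [Finset.Ico_add_one_right_eq_Icc]
      rw [this, Finset.sum_eq_sum_Ico_succ_bot (by omega)]
      rw [Nat.cast_one, Real.one_rpow]
      congr 1
      rw [← Finset.sum_Ico_add' (fun x:ℕ => ((x:ℕ):ℝ)^(1-α)) 1 m 1]
    rw [hsplit]
    calc 1 + ∑ i ∈ Finset.Ico 1 m, ((i+1:ℕ):ℝ)^(1-α)
        ≤ 1 + ((m:ℝ)^(2-α) - 1) / (2-α) := by
          have := key.trans_eq hint; linarith
      _ ≤ 4/(2-α) * (m:ℝ)^(2-α) := by
          have he : 1 + ((m:ℝ)^(2-α) - 1) / (2-α) = ((2-α) + ((m:ℝ)^(2-α) - 1))/(2-α) := by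
            field_simp
          rw [he, show 4/(2-α) * (m:ℝ)^(2-α) = 4 * (m:ℝ)^(2-α) / (2-α) by ring]
          gcongr
          nlinarith

lemma sq_le_gauss (z : ℕ) : (z:ℝ)^2 ≤ ∑ x ∈ Icc 1 z, 2*(x:ℝ) := by
  induction z with
  | zero => simp
  | succ k ih =>
    rw [Finset.sum_Icc_succ_top (by omega)]
    push_cast
    nlinarith

lemma tail_bound (α : ℝ) (p : ℤ → ℝ) (hnn : ∀ z : ℤ, 0 ≤ p z) (hsum : Summable p)
    (hDAN : MemDAN p α) :
    ∃ C₀ : ℝ, 0 < C₀ ∧ ∀ x m : ℕ, 1 ≤ x →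
      ∑ z ∈ Icc x m, p (z:ℤ) ≤ C₀ * (x:ℝ)^(-α) := by
  obtain ⟨c, _, htend⟩ := hDAN
  obtain ⟨C, hC⟩ := (htend.isBoundedUnder_le).bddAbove_range
  simp only [upperBounds, Set.mem_range, Set.mem_setOf_eq] at hC
  refine ⟨max C 1, lt_of_lt_of_le one_pos (le_max_right _ _), ?_⟩
  intro x m hx
  have hxpos : (0:ℝ) < (x:ℝ) := by exact_mod_cast hx
  have hT : ∑ z ∈ Icc x m, p (z:ℤ) ≤ ∑' k : ℕ, p ((x:ℤ) + (k:ℤ)) := by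
    have hre : ∑ z ∈ Icc x m, p (z:ℤ) = ∑ k ∈ range (m+1-x), p ((x:ℤ) + (k:ℤ)) := by
      rw [← Finset.Ico_add_one_right_eq_Icc, Finset.sum_Ico_eq_sum_range]
      exact Finset.sum_congr rfl (fun k _ => by push_cast; ring_nf)
    rw [hre]
    exact Summable.sum_le_tsum _ (fun k _ => hnn _)
      (hsum.comp_injective (fun a b h => by omega))
  have hCx : (x:ℝ)^α * ∑' k : ℕ, p ((x:ℤ) + (k:ℤ)) ≤ max C 1 :=
    le_trans (hC ⟨x, rfl⟩) (le_max_left _ _)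
  have hpow : (0:ℝ) < (x:ℝ)^α := Real.rpow_pos_of_pos hxpos _
  rw [Real.rpow_neg hxpos.le, ← div_eq_mul_inv, le_div_iff₀ hpow]
  calc (∑ z ∈ Icc x m, p (z:ℤ)) * (x:ℝ)^α
      ≤ (∑' k : ℕ, p ((x:ℤ) + (k:ℤ))) * (x:ℝ)^α := by
        apply mul_le_mul_of_nonneg_right hT hpow.le
    _ = (x:ℝ)^α * ∑' k : ℕ, p ((x:ℤ) + (k:ℤ)) := mul_comm _ _
    _ ≤ max C 1 := hCx

lemma weighted_sum_bound (α : ℝ) (hα0 : 0 < α) (hα2 : α < 2)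
    (p : ℤ → ℝ) (hnn : ∀ z : ℤ, 0 ≤ p z) (C₀ : ℝ) (hC₀ : 0 < C₀)
    (htail : ∀ x m : ℕ, 1 ≤ x → ∑ z ∈ Icc x m, p (z:ℤ) ≤ C₀ * (x:ℝ)^(-α))
    (m : ℕ) (hm : 1 ≤ m) :
    ∑ z ∈ Icc 1 m, p (z:ℤ) * (z:ℝ)^2 ≤ 8*C₀/(2-α) * (m:ℝ)^(2-α) := by
  have step1 : ∑ z ∈ Icc 1 m, p (z:ℤ) * (z:ℝ)^2
      ≤ ∑ z ∈ Icc 1 m, ∑ x ∈ Icc 1 z, p (z:ℤ) * (2*(x:ℝ)) := by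
    apply Finset.sum_le_sum
    intro z _
    rw [← Finset.mul_sum]
    exact mul_le_mul_of_nonneg_left (sq_le_gauss z) (hnn _)
  have step2 : ∑ z ∈ Icc 1 m, ∑ x ∈ Icc 1 z, p (z:ℤ) * (2*(x:ℝ))
      = ∑ x ∈ Icc 1 m, ∑ z ∈ Icc x m, p (z:ℤ) * (2*(x:ℝ)) := by
    simp_rw [← Finset.Ico_add_one_right_eq_Icc]
    exact (Finset.sum_Ico_Ico_comm 1 (m+1) (fun x z => p (z:ℤ) * (2*(x:ℝ)))).symm
  have step3 : ∑ x ∈ Icc 1 m, ∑ z ∈ Icc x m, p (z:ℤ) * (2*(x:ℝ))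
      ≤ ∑ x ∈ Icc 1 m, 2*C₀*(x:ℝ)^(1-α) := by
    apply Finset.sum_le_sum
    intro x hx
    rw [mem_Icc] at hx
    have hx1 : (1:ℝ) ≤ (x:ℝ) := by exact_mod_cast hx.1
    have hxpos : (0:ℝ) < x := by linarith
    have : ∑ z ∈ Icc x m, p (z:ℤ) * (2*(x:ℝ))
        = (∑ z ∈ Icc x m, p (z:ℤ)) * (2*(x:ℝ)) := by rw [Finset.sum_mul]
    rw [this]
    calc (∑ z ∈ Icc x m, p (z:ℤ)) * (2*(x:ℝ))
        ≤ (C₀ * (x:ℝ)^(-α)) * (2*(x:ℝ)) := by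
          apply mul_le_mul_of_nonneg_right (htail x m hx.1) (by positivity)
      _ = 2*C₀*((x:ℝ)^(-α) * (x:ℝ)^(1:ℝ)) := by rw [Real.rpow_one]; ring
      _ = 2*C₀*(x:ℝ)^(1-α) := by rw [← Real.rpow_add hxpos]; ring_nf
  have step4 : ∑ x ∈ Icc 1 m, 2*C₀*(x:ℝ)^(1-α) ≤ 2*C₀ * (4/(2-α) * (m:ℝ)^(2-α)) := by
    rw [← Finset.mul_sum]
    exact mul_le_mul_of_nonneg_left (sum_rpow_le α hα0 hα2 m hm) (by positivity)
  calc ∑ z ∈ Icc 1 m, p (z:ℤ) * (z:ℝ)^2 ≤ 2*C₀ * (4/(2-α) * (m:ℝ)^(2-α)) :=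
        le_trans step1 (le_trans (le_of_eq step2) (le_trans step3 step4))
    _ = 8*C₀/(2-α) * (m:ℝ)^(2-α) := by ring

lemma swap_mem_of_mem {s : Finset ℤ} {u v a : ℤ} (hu : u ∈ s) (hv : v ∈ s) (ha : a ∈ s) :
    Equiv.swap u v a ∈ s := by
  rcases eq_or_ne a u with rfl | h1
  · rwa [Equiv.swap_apply_left]
  rcases eq_or_ne a v with rfl | h2
  · rwa [Equiv.swap_apply_right]
  rwa [Equiv.swap_apply_of_ne_of_ne h1 h2]

lemma card_filter_perm (s : Finset ℤ) (ℓ : ℕ) (σ : Equiv.Perm ℤ)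
    (hσ : ∀ a ∈ s, σ a ∈ s)
    (P Q : Finset ℤ → Prop) [DecidablePred P] [DecidablePred Q]
    (hPQ : ∀ η, η ⊆ s → (P η ↔ Q (η.map σ.toEmbedding))) :
    ((Finset.powersetCard ℓ s).filter P).card
      = ((Finset.powersetCard ℓ s).filter Q).card := by
  have hinv : ∀ a ∈ s, σ.symm a ∈ s := by
    have himg : s.image σ = s := by
      apply Finset.eq_of_subset_of_card_le
      · intro a ha; obtain ⟨b, hb, rfl⟩ := Finset.mem_image.mp ha; exact hσ b hb
      · rw [Finset.card_image_of_injective _ σ.injective]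
    intro a ha
    rw [← himg] at ha
    obtain ⟨b, hb, hba⟩ := Finset.mem_image.mp ha
    rwa [← hba, Equiv.symm_apply_apply]
  have hmapsub : ∀ (τ : Equiv.Perm ℤ), (∀ a ∈ s, τ a ∈ s) →
      ∀ η : Finset ℤ, η ⊆ s → η.map τ.toEmbedding ⊆ s := by
    intro τ hτ η hη a ha
    obtain ⟨b, hb, rfl⟩ := Finset.mem_map.mp ha
    exact hτ b (hη hb)
  have hcancel : ∀ (τ : Equiv.Perm ℤ) (η : Finset ℤ),
      (η.map τ.toEmbedding).map τ.symm.toEmbedding = η := by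
    intro τ η; ext a
    simp [Finset.mem_map_equiv]
  have hQP : ∀ η, η ⊆ s → (Q η ↔ P (η.map σ.symm.toEmbedding)) := by
    intro η hη
    rw [hPQ (η.map σ.symm.toEmbedding) (hmapsub σ.symm hinv η hη)]
    rw [show (η.map σ.symm.toEmbedding).map σ.toEmbedding = η by
      have := hcancel σ.symm η; simpa using this]
  refine Finset.card_bij' (fun η _ => η.map σ.toEmbedding)
    (fun η _ => η.map σ.symm.toEmbedding) ?_ ?_ ?_ ?_
  · intro η hη
    rw [Finset.mem_filter, Finset.mem_powersetCard] at hη ⊢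
    exact ⟨⟨hmapsub σ hσ η hη.1.1, by rw [Finset.card_map]; exact hη.1.2⟩,
      (hPQ η hη.1.1).mp hη.2⟩
  · intro η hη
    rw [Finset.mem_filter, Finset.mem_powersetCard] at hη ⊢
    exact ⟨⟨hmapsub σ.symm hinv η hη.1.1, by rw [Finset.card_map]; exact hη.1.2⟩,
      (hQP η hη.1.1).mp hη.2⟩
  · intro η _; exact hcancel σ η
  · intro η _; have := hcancel σ.symm η; simpa using this

lemma count_pair_eq (n ℓ : ℕ) (b : Bool) {x y x' y' : ℤ}
    (hx : x ∈ Icc (-(n:ℤ)) n) (hy : y ∈ Icc (-(n:ℤ)) n)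
    (hx' : x' ∈ Icc (-(n:ℤ)) n) (hy' : y' ∈ Icc (-(n:ℤ)) n)
    (hxy : x ≠ y) (hxy' : x' ≠ y') :
    ((exConfigs n ℓ).filter (fun η => x ∈ η ∧ (y ∈ η ↔ b = true))).card
    = ((exConfigs n ℓ).filter (fun η => x' ∈ η ∧ (y' ∈ η ↔ b = true))).card := by
  set σ₁ := Equiv.swap x x' with hσ₁
  set σ := σ₁.trans (Equiv.swap (σ₁ y) y') with hσdef
  have hne : x' ≠ σ₁ y := by
    intro h
    apply hxy
    have : σ₁ x' = σ₁ (σ₁ y) := congrArg σ₁ h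
    rwa [Equiv.swap_apply_right, Equiv.swap_apply_self] at this
  have hσx : σ x = x' := by
    rw [hσdef, Equiv.trans_apply, hσ₁, Equiv.swap_apply_left]
    exact Equiv.swap_apply_of_ne_of_ne hne hxy'
  have hσy : σ y = y' := by
    rw [hσdef, Equiv.trans_apply, Equiv.swap_apply_left]
  have hσ₁y : σ₁ y ∈ Icc (-(n:ℤ)) n := swap_mem_of_mem hx hx' hy
  have hσs : ∀ a ∈ Icc (-(n:ℤ)) n, σ a ∈ Icc (-(n:ℤ)) n := by
    intro a ha
    rw [hσdef, Equiv.trans_apply]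
    exact swap_mem_of_mem hσ₁y hy' (swap_mem_of_mem hx hx' ha)
  apply card_filter_perm _ _ σ hσs
  intro η hη
  rw [← hσx, ← hσy]
  simp [Finset.mem_map']

/-- reference count: configs containing `n` but not `-n` -/
noncomputable def Mcount (n ℓ : ℕ) : ℕ :=
  ((exConfigs n ℓ).filter (fun η => (n:ℤ) ∈ η ∧ -(n:ℤ) ∉ η)).card

/-- reference count: configs containing both `n` and `-n` -/
noncomputable def Bcount (n ℓ : ℕ) : ℕ :=
  ((exConfigs n ℓ).filter (fun η => (n:ℤ) ∈ η ∧ -(n:ℤ) ∈ η)).card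

lemma count_in_notin (n ℓ : ℕ) (hn : 1 ≤ n) {x y : ℤ}
    (hx : x ∈ Icc (-(n:ℤ)) n) (hy : y ∈ Icc (-(n:ℤ)) n) (hxy : x ≠ y) :
    ((exConfigs n ℓ).filter (fun η => x ∈ η ∧ y ∉ η)).card = Mcount n ℓ := by
  have hnm : (n:ℤ) ∈ Icc (-(n:ℤ)) n := by simp only [mem_Icc]; omega
  have hnm' : -(n:ℤ) ∈ Icc (-(n:ℤ)) n := by simp only [mem_Icc]; omega
  have hne : (n:ℤ) ≠ -(n:ℤ) := by omega
  have h1 : ((exConfigs n ℓ).filter (fun η => x ∈ η ∧ y ∉ η)).card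
      = ((exConfigs n ℓ).filter (fun η => x ∈ η ∧ (y ∈ η ↔ false = true))).card := by
    congr 1; apply Finset.filter_congr; intro η _; simp
  have h2 : Mcount n ℓ
      = ((exConfigs n ℓ).filter (fun η => (n:ℤ) ∈ η ∧ (-(n:ℤ) ∈ η ↔ false = true))).card := by
    unfold Mcount; congr 1; apply Finset.filter_congr; intro η _; simp
  rw [h1, h2]
  exact count_pair_eq n ℓ false hx hy hnm hnm' hxy hne

lemma count_in_in (n ℓ : ℕ) (hn : 1 ≤ n) {x y : ℤ}
    (hx : x ∈ Icc (-(n:ℤ)) n) (hy : y ∈ Icc (-(n:ℤ)) n) (hxy : x ≠ y) :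
    ((exConfigs n ℓ).filter (fun η => x ∈ η ∧ y ∈ η)).card = Bcount n ℓ := by
  have hnm : (n:ℤ) ∈ Icc (-(n:ℤ)) n := by simp only [mem_Icc]; omega
  have hnm' : -(n:ℤ) ∈ Icc (-(n:ℤ)) n := by simp only [mem_Icc]; omega
  have hne : (n:ℤ) ≠ -(n:ℤ) := by omega
  have h1 : ((exConfigs n ℓ).filter (fun η => x ∈ η ∧ y ∈ η)).card
      = ((exConfigs n ℓ).filter (fun η => x ∈ η ∧ (y ∈ η ↔ true = true))).card := by
    congr 1; apply Finset.filter_congr; intro η _; simp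
  have h2 : Bcount n ℓ
      = ((exConfigs n ℓ).filter (fun η => (n:ℤ) ∈ η ∧ (-(n:ℤ) ∈ η ↔ true = true))).card := by
    unfold Bcount; congr 1; apply Finset.filter_congr; intro η _; simp
  rw [h1, h2]
  exact count_pair_eq n ℓ true hx hy hnm hnm' hxy hne

lemma count_in (n ℓ : ℕ) (hn : 1 ≤ n) {x : ℤ} (hx : x ∈ Icc (-(n:ℤ)) n) :
    ((exConfigs n ℓ).filter (fun η => x ∈ η)).card = Bcount n ℓ + Mcount n ℓ := by
  set y : ℤ := if x = (n:ℤ) then -(n:ℤ) else (n:ℤ) with hy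
  have hymem : y ∈ Icc (-(n:ℤ)) n := by
    rw [hy]; split <;> (simp only [mem_Icc]; omega)
  have hxy : x ≠ y := by
    rw [hy]; split
    · omega
    · assumption
  have hsplit := Finset.card_filter_add_card_filter_not
    (s := (exConfigs n ℓ).filter (fun η => x ∈ η)) (p := fun η => y ∈ η)
  rw [Finset.filter_filter, Finset.filter_filter] at hsplit
  rw [← count_in_in n ℓ hn hx hymem hxy, ← count_in_notin n ℓ hn hx hymem hxy]
  exact hsplit.symm

lemma Mcount_pos (n ℓ : ℕ) (hn : 1 ≤ n) (hℓ1 : 1 ≤ ℓ) (hℓ2 : ℓ ≤ 2*n) :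
    1 ≤ Mcount n ℓ := by
  have hcard : (Icc (-(n:ℤ)+1) ((n:ℤ)-1)).card = 2*n - 1 := by
    rw [Int.card_Icc]; omega
  obtain ⟨t, ht, htcard⟩ := Finset.exists_subset_card_eq
    (s := Icc (-(n:ℤ)+1) ((n:ℤ)-1)) (n := ℓ-1) (by omega)
  have hnt : (n:ℤ) ∉ t := by
    intro h; have := ht h; rw [mem_Icc] at this; omega
  have hmnt : -(n:ℤ) ∉ t := by
    intro h; have := ht h; rw [mem_Icc] at this; omega
  set η₀ : Finset ℤ := insert (n:ℤ) t with hη₀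
  have hmem : η₀ ∈ (exConfigs n ℓ).filter (fun η => (n:ℤ) ∈ η ∧ -(n:ℤ) ∉ η) := by
    rw [Finset.mem_filter]
    refine ⟨?_, Finset.mem_insert_self _ _, ?_⟩
    · rw [exConfigs, Finset.mem_powersetCard]
      constructor
      · intro a ha
        rcases Finset.mem_insert.mp ha with rfl | hat
        · simp only [mem_Icc]; omega
        · have := ht hat; rw [mem_Icc] at this ⊢; omega
      · rw [Finset.card_insert_of_notMem hnt, htcard]; omega
    · intro h
      rcases Finset.mem_insert.mp h with h | h
      · omega
      · exact hmnt h
  rw [Mcount, Nat.one_le_iff_ne_zero, ← Nat.pos_iff_ne_zero, Finset.card_pos]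
  exact ⟨η₀, hmem⟩

lemma zsum (n : ℕ) : ∑ x ∈ Icc (-(n:ℤ)) n, (x:ℝ) = 0 := by
  have hmap : (Icc (-(n:ℤ)) n).map ⟨Neg.neg, neg_injective⟩ = Icc (-(n:ℤ)) n := by
    ext a
    simp only [Finset.mem_map, mem_Icc, Function.Embedding.coeFn_mk]
    constructor
    · rintro ⟨b, hb, rfl⟩; omega
    · intro ha; exact ⟨-a, by omega, by ring⟩
  have h := Finset.sum_map (Icc (-(n:ℤ)) n) ⟨Neg.neg, neg_injective⟩ (fun x : ℤ => (x:ℝ))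
  rw [hmap] at h
  simp only [Function.Embedding.coeFn_mk, Int.cast_neg] at h
  rw [Finset.sum_neg_distrib] at h
  linarith

lemma split_symm (m : ℕ) (g : ℤ → ℝ) (hg0 : g 0 = 0) (hsym : ∀ z, g (-z) = g z) :
    ∑ z ∈ Icc (-(m:ℤ)) m, g z = 2 * ∑ k ∈ Icc 1 m, g (k:ℤ) := by
  have hunion : Icc (-(m:ℤ)) m = Icc (-(m:ℤ)) 0 ∪ Icc 1 m := by
    ext z; simp only [mem_Icc, Finset.mem_union]; omega
  have hdisj : Disjoint (Icc (-(m:ℤ)) 0) (Icc (1:ℤ) m) := by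
    rw [Finset.disjoint_left]; intro a ha hb
    rw [mem_Icc] at ha hb; omega
  rw [hunion, Finset.sum_union hdisj]
  have hneg : ∑ z ∈ Icc (-(m:ℤ)) 0, g z = ∑ z ∈ Icc (-(m:ℤ)) (-1), g z := by
    symm
    apply Finset.sum_subset
    · intro a ha; rw [mem_Icc] at ha ⊢; omega
    · intro a ha hna; rw [mem_Icc] at ha hna
      have : a = 0 := by omega
      rw [this, hg0]
  have hmapneg : (Icc (1:ℤ) m).map ⟨Neg.neg, neg_injective⟩ = Icc (-(m:ℤ)) (-1) := by
    ext a
    simp only [Finset.mem_map, mem_Icc, Function.Embedding.coeFn_mk]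
    constructor
    · rintro ⟨b, hb, rfl⟩; omega
    · intro ha; exact ⟨-a, by omega, by ring⟩
  have h2 : ∑ z ∈ Icc (-(m:ℤ)) (-1), g z = ∑ z ∈ Icc (1:ℤ) m, g z := by
    rw [← hmapneg, Finset.sum_map]
    simp only [Function.Embedding.coeFn_mk]
    exact Finset.sum_congr rfl (fun z _ => hsym z)
  have hmapcast : (Icc (1:ℕ) m).map ⟨Nat.cast, Nat.cast_injective⟩ = Icc (1:ℤ) m := by
    ext a
    simp only [Finset.mem_map, mem_Icc, Function.Embedding.coeFn_mk]
    constructor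
    · rintro ⟨b, hb, rfl⟩; omega
    · intro ha; exact ⟨a.toNat, by omega, by omega⟩
  have h3 : ∑ z ∈ Icc (1:ℤ) m, g z = ∑ k ∈ Icc (1:ℕ) m, g (k:ℤ) := by
    rw [← hmapcast, Finset.sum_map]
    simp only [Function.Embedding.coeFn_mk]
  rw [hneg, h2, h3]
  ring

lemma cube_le_sum_sq (n : ℕ) : (n:ℝ)^3/3 ≤ ∑ k ∈ Icc 1 n, ((k:ℤ):ℝ)^2 := by
  induction n with
  | zero => simp
  | succ m ih =>
    rw [Finset.sum_Icc_succ_top (by omega)]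
    push_cast
    push_cast at ih
    nlinarith [ih, (Nat.cast_nonneg m : (0:ℝ) ≤ (m:ℝ))]

lemma config_subset {n ℓ : ℕ} {η : Finset ℤ} (h : η ∈ exConfigs n ℓ) :
    η ⊆ Icc (-(n:ℤ)) n := (Finset.mem_powersetCard.mp h).1

lemma indicator_form {n ℓ : ℕ} {η : Finset ℤ} (hη : η ∈ exConfigs n ℓ) :
    ∑ u ∈ η, (u:ℝ) = ∑ x ∈ Icc (-(n:ℤ)) n, (if x ∈ η then (x:ℝ) else 0) := by
  rw [Finset.sum_ite_mem, Finset.inter_eq_right.mpr (config_subset hη)]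

lemma sum_indicator_count (C : Finset (Finset ℤ)) (P : Finset ℤ → Prop) [DecidablePred P] (c : ℝ) :
    ∑ η ∈ C, (if P η then c else 0) = ((C.filter P).card : ℝ) * c := by
  rw [← Finset.sum_filter, Finset.sum_const, nsmul_eq_mul]

lemma mean_zero (n ℓ : ℕ) (hn : 1 ≤ n) :
    ∑ η ∈ exConfigs n ℓ, (∑ u ∈ η, (u:ℝ)) = 0 := by
  calc ∑ η ∈ exConfigs n ℓ, (∑ u ∈ η, (u:ℝ))
      = ∑ η ∈ exConfigs n ℓ, ∑ x ∈ Icc (-(n:ℤ)) n, (if x ∈ η then (x:ℝ) else 0) :=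
        Finset.sum_congr rfl (fun η hη => indicator_form hη)
    _ = ∑ x ∈ Icc (-(n:ℤ)) n, ∑ η ∈ exConfigs n ℓ, (if x ∈ η then (x:ℝ) else 0) :=
        Finset.sum_comm
    _ = ∑ x ∈ Icc (-(n:ℤ)) n, ((Bcount n ℓ + Mcount n ℓ : ℕ):ℝ) * (x:ℝ) := by
        refine Finset.sum_congr rfl (fun x hx => ?_)
        rw [sum_indicator_count (exConfigs n ℓ) (fun η => x ∈ η), count_in n ℓ hn hx]
    _ = ((Bcount n ℓ + Mcount n ℓ : ℕ):ℝ) * ∑ x ∈ Icc (-(n:ℤ)) n, (x:ℝ) := by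
        rw [Finset.mul_sum]
    _ = 0 := by rw [zsum]; ring

lemma variance_eq (n ℓ : ℕ) (hn : 1 ≤ n) :
    ∑ η ∈ exConfigs n ℓ, (∑ u ∈ η, (u:ℝ))^2
      = (Mcount n ℓ : ℝ) * ∑ x ∈ Icc (-(n:ℤ)) n, (x:ℝ)^2 := by
  have key : ∀ x ∈ Icc (-(n:ℤ)) n, ∀ y ∈ Icc (-(n:ℤ)) n,
      (((exConfigs n ℓ).filter (fun η => x ∈ η ∧ y ∈ η)).card : ℝ)
        = (Bcount n ℓ : ℝ) + (if x = y then (Mcount n ℓ : ℝ) else 0) := by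
    intro x hx y hy
    rcases eq_or_ne x y with rfl | hxy
    · rw [if_pos rfl]
      have : (exConfigs n ℓ).filter (fun η => x ∈ η ∧ x ∈ η)
          = (exConfigs n ℓ).filter (fun η => x ∈ η) := by
        apply Finset.filter_congr; intro η _; simp
      rw [this, count_in n ℓ hn hx]
      push_cast; ring
    · rw [if_neg hxy, count_in_in n ℓ hn hx hy hxy, add_zero]
  calc ∑ η ∈ exConfigs n ℓ, (∑ u ∈ η, (u:ℝ))^2
      = ∑ η ∈ exConfigs n ℓ, ∑ x ∈ Icc (-(n:ℤ)) n, ∑ y ∈ Icc (-(n:ℤ)) n,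
          (if x ∈ η then (x:ℝ) else 0) * (if y ∈ η then (y:ℝ) else 0) := by
        refine Finset.sum_congr rfl (fun η hη => ?_)
        rw [indicator_form hη, pow_two, Finset.sum_mul_sum]
    _ = ∑ x ∈ Icc (-(n:ℤ)) n, ∑ y ∈ Icc (-(n:ℤ)) n, ∑ η ∈ exConfigs n ℓ,
          (if x ∈ η then (x:ℝ) else 0) * (if y ∈ η then (y:ℝ) else 0) := by
        rw [Finset.sum_comm]
        refine Finset.sum_congr rfl (fun x _ => ?_)
        rw [Finset.sum_comm]
    _ = ∑ x ∈ Icc (-(n:ℤ)) n, ∑ y ∈ Icc (-(n:ℤ)) n,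
          (((exConfigs n ℓ).filter (fun η => x ∈ η ∧ y ∈ η)).card : ℝ) * ((x:ℝ)*(y:ℝ)) := by
        refine Finset.sum_congr rfl (fun x _ => Finset.sum_congr rfl (fun y _ => ?_))
        rw [← sum_indicator_count (exConfigs n ℓ) (fun η => x ∈ η ∧ y ∈ η)]
        refine Finset.sum_congr rfl (fun η _ => ?_)
        by_cases hx : x ∈ η <;> by_cases hy : y ∈ η <;> simp [hx, hy]
    _ = ∑ x ∈ Icc (-(n:ℤ)) n, ∑ y ∈ Icc (-(n:ℤ)) n,
          ((Bcount n ℓ : ℝ) * ((x:ℝ)*(y:ℝ))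
            + (if x = y then (Mcount n ℓ : ℝ) * ((x:ℝ)*(y:ℝ)) else 0)) := by
        refine Finset.sum_congr rfl (fun x hx => Finset.sum_congr rfl (fun y hy => ?_))
        rw [key x hx y hy]
        split_ifs <;> ring
    _ = ∑ x ∈ Icc (-(n:ℤ)) n, ((Bcount n ℓ : ℝ) * (x:ℝ) * (∑ y ∈ Icc (-(n:ℤ)) n, (y:ℝ))
            + (Mcount n ℓ : ℝ) * (x:ℝ)^2) := by
        refine Finset.sum_congr rfl (fun x hx => ?_)
        rw [Finset.sum_add_distrib]
        congr 1
        · rw [Finset.mul_sum]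
          exact Finset.sum_congr rfl (fun y _ => by ring)
        · rw [Finset.sum_ite_eq, if_pos hx]; ring
    _ = ∑ x ∈ Icc (-(n:ℤ)) n, (Mcount n ℓ : ℝ) * (x:ℝ)^2 := by
        rw [zsum]
        exact Finset.sum_congr rfl (fun x _ => by ring)
    _ = (Mcount n ℓ : ℝ) * ∑ x ∈ Icc (-(n:ℤ)) n, (x:ℝ)^2 := by
        rw [Finset.mul_sum]

lemma swap_diff {η : Finset ℤ} {x y : ℤ} (hx : x ∈ η) (hy : y ∉ η) :
    ∑ u ∈ exSwap η x y, (u:ℝ) = (∑ u ∈ η, (u:ℝ)) + (y:ℝ) - (x:ℝ) := by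
  rw [exSwap, Finset.sum_insert (fun h => hy (Finset.mem_of_mem_erase h)),
    Finset.sum_erase_eq_sub hx]
  ring

lemma dirichlet_eq (n ℓ : ℕ) (hn : 1 ≤ n) (p : ℤ → ℝ) :
    ∑ η ∈ exConfigs n ℓ, ∑ x ∈ Icc (-(n:ℤ)) n, ∑ y ∈ Icc (-(n:ℤ)) n,
        p (y - x) * (if x ∈ η ∧ y ∉ η
          then ((∑ u ∈ exSwap η x y, (u:ℝ)) - ∑ u ∈ η, (u:ℝ))^2 else 0)
      = (Mcount n ℓ : ℝ) * ∑ x ∈ Icc (-(n:ℤ)) n, ∑ y ∈ Icc (-(n:ℤ)) n,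
          p (y - x) * ((y:ℝ) - (x:ℝ))^2 := by
  calc ∑ η ∈ exConfigs n ℓ, ∑ x ∈ Icc (-(n:ℤ)) n, ∑ y ∈ Icc (-(n:ℤ)) n,
        p (y - x) * (if x ∈ η ∧ y ∉ η
          then ((∑ u ∈ exSwap η x y, (u:ℝ)) - ∑ u ∈ η, (u:ℝ))^2 else 0)
      = ∑ η ∈ exConfigs n ℓ, ∑ x ∈ Icc (-(n:ℤ)) n, ∑ y ∈ Icc (-(n:ℤ)) n,
          (if x ∈ η ∧ y ∉ η then p (y - x) * ((y:ℝ) - (x:ℝ))^2 else 0) := by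
        refine Finset.sum_congr rfl (fun η _ => Finset.sum_congr rfl
          (fun x _ => Finset.sum_congr rfl (fun y _ => ?_)))
        by_cases hC : x ∈ η ∧ y ∉ η
        · rw [if_pos hC, if_pos hC, swap_diff hC.1 hC.2]
          ring_nf
        · rw [if_neg hC, if_neg hC, mul_zero]
    _ = ∑ x ∈ Icc (-(n:ℤ)) n, ∑ y ∈ Icc (-(n:ℤ)) n, ∑ η ∈ exConfigs n ℓ,
          (if x ∈ η ∧ y ∉ η then p (y - x) * ((y:ℝ) - (x:ℝ))^2 else 0) := by
        rw [Finset.sum_comm]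
        refine Finset.sum_congr rfl (fun x _ => ?_)
        rw [Finset.sum_comm]
    _ = ∑ x ∈ Icc (-(n:ℤ)) n, ∑ y ∈ Icc (-(n:ℤ)) n,
          (Mcount n ℓ : ℝ) * (p (y - x) * ((y:ℝ) - (x:ℝ))^2) := by
        refine Finset.sum_congr rfl (fun x hx => Finset.sum_congr rfl (fun y hy => ?_))
        rw [sum_indicator_count (exConfigs n ℓ) (fun η => x ∈ η ∧ y ∉ η)]
        rcases eq_or_ne x y with rfl | hxy
        · simp
        · rw [count_in_notin n ℓ hn hx hy hxy]
    _ = (Mcount n ℓ : ℝ) * ∑ x ∈ Icc (-(n:ℤ)) n, ∑ y ∈ Icc (-(n:ℤ)) n,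
          p (y - x) * ((y:ℝ) - (x:ℝ))^2 := by
        rw [Finset.mul_sum]
        exact Finset.sum_congr rfl (fun x _ => by rw [Finset.mul_sum])

lemma ptot_le (n : ℕ) (p : ℤ → ℝ) (hnn : ∀ z, 0 ≤ p z) :
    ∑ x ∈ Icc (-(n:ℤ)) n, ∑ y ∈ Icc (-(n:ℤ)) n, p (y - x) * ((y:ℝ)-(x:ℝ))^2
      ≤ (2*(n:ℝ)+1) * ∑ z ∈ Icc (-(2*n:ℤ)) (2*n), p z * (z:ℝ)^2 := by
  have hx : ∀ x ∈ Icc (-(n:ℤ)) n,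
      ∑ y ∈ Icc (-(n:ℤ)) n, p (y - x) * ((y:ℝ)-(x:ℝ))^2
        ≤ ∑ z ∈ Icc (-(2*n:ℤ)) (2*n), p z * (z:ℝ)^2 := by
    intro x hxm
    rw [mem_Icc] at hxm
    have hre : ∑ y ∈ Icc (-(n:ℤ)) n, p (y - x) * ((y:ℝ)-(x:ℝ))^2
        = ∑ z ∈ Icc (-(n:ℤ)-x) ((n:ℤ)-x), p z * (z:ℝ)^2 := by
      apply Finset.sum_nbij' (i := fun y => y - x) (j := fun z => z + x)
      · intro a ha; rw [mem_Icc] at ha ⊢; omega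
      · intro a ha; rw [mem_Icc] at ha ⊢; omega
      · intro a _; ring
      · intro a _; ring
      · intro a _
        rw [show (a:ℝ) - (x:ℝ) = ((a - x : ℤ):ℝ) by push_cast; ring]
    rw [hre]
    apply Finset.sum_le_sum_of_subset_of_nonneg
    · intro z hz; rw [mem_Icc] at hz ⊢; omega
    · intro z _ _
      have := hnn z
      positivity
  calc ∑ x ∈ Icc (-(n:ℤ)) n, ∑ y ∈ Icc (-(n:ℤ)) n, p (y - x) * ((y:ℝ)-(x:ℝ))^2
      ≤ ∑ _x ∈ Icc (-(n:ℤ)) n, ∑ z ∈ Icc (-(2*n:ℤ)) (2*n), p z * (z:ℝ)^2 :=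
        Finset.sum_le_sum hx
    _ = (2*(n:ℝ)+1) * ∑ z ∈ Icc (-(2*n:ℤ)) (2*n), p z * (z:ℝ)^2 := by
        rw [Finset.sum_const, nsmul_eq_mul, Int.card_Icc]
        congr 1
        have : ((n:ℤ) + 1 - -(n:ℤ)).toNat = 2*n+1 := by omega
        rw [this]
        push_cast; ring

theorem exclusion_spectral_gap_upper_bound
    (α : ℝ) (hα0 : 0 < α) (hα2 : α < 2)
    (p : ℤ → ℝ) (hp : IsSymTransitionRate p) (hp1 : 0 < p 1)
    (hDAN : MemDAN p α) :
    ∃ κ₂ : ℝ, 0 < κ₂ ∧ ∀ n : ℕ, 1 ≤ n → ∀ ℓ : ℕ, 1 ≤ ℓ → ℓ ≤ 2 * n →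
      ∃ f : Finset ℤ → ℝ,
      (∃ η ∈ exConfigs n ℓ, f η ≠ 0) ∧
      (∑ η ∈ exConfigs n ℓ, f η) = 0 ∧
      (1 / 2) * ∑ η ∈ exConfigs n ℓ, ∑ x ∈ Finset.Icc (-(n : ℤ)) n,
          ∑ y ∈ Finset.Icc (-(n : ℤ)) n,
            p (y - x) * (if x ∈ η ∧ y ∉ η then (f (exSwap η x y) - f η) ^ 2 else 0) ≤
        κ₂ * (2 * (n : ℝ) + 1) ^ (-α) * ∑ η ∈ exConfigs n ℓ, (f η) ^ 2 := by
  obtain ⟨hnn, hp0, hsymm, hsum, -⟩ := hp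
  obtain ⟨C₀, hC₀, htail⟩ := tail_bound α p hnn hsum hDAN
  have h2α : (0:ℝ) < 2 - α := by linarith
  refine ⟨324 * C₀ / (2 - α), by positivity, ?_⟩
  intro n hn ℓ hℓ1 hℓ2
  have hM : 1 ≤ Mcount n ℓ := Mcount_pos n ℓ hn hℓ1 hℓ2
  have hMpos : (0:ℝ) < (Mcount n ℓ : ℝ) := by exact_mod_cast hM
  have hn1 : (1:ℝ) ≤ (n:ℝ) := by exact_mod_cast hn
  have hVlow : (2:ℝ)/3 * (n:ℝ)^3 ≤ ∑ x ∈ Finset.Icc (-(n:ℤ)) n, (x:ℝ)^2 := by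
    have hsp := split_symm n (fun z : ℤ => (z:ℝ)^2) (by norm_num) (fun z => by push_cast; ring)
    rw [hsp]
    have := cube_le_sum_sq n
    linarith
  have hn3 : (1:ℝ) ≤ (n:ℝ)^3 := one_le_pow₀ hn1
  have hVpos : (0:ℝ) < ∑ x ∈ Finset.Icc (-(n:ℤ)) n, (x:ℝ)^2 := by nlinarith
  refine ⟨fun η => ∑ u ∈ η, (u:ℝ), ?_, mean_zero n ℓ hn, ?_⟩
  · by_contra h
    push_neg at h
    have hzero : ∑ η ∈ exConfigs n ℓ, (∑ u ∈ η, (u:ℝ))^2 = 0 :=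
      Finset.sum_eq_zero (fun η hη => by rw [h η hη]; ring)
    rw [variance_eq n ℓ hn] at hzero
    nlinarith
  · set b : ℝ := 2*(n:ℝ)+1 with hbdef
    clear_value b
    have hbpos : (0:ℝ) < b := by rw [hbdef]; positivity
    have hbneg : (0:ℝ) < b^(-α) := Real.rpow_pos_of_pos hbpos _
    -- bound on the z-weighted sum
    have hW : ∑ z ∈ Finset.Icc (-(2*n:ℤ)) (2*n), p z * (z:ℝ)^2
        = 2 * ∑ k ∈ Finset.Icc 1 (2*n), p (k:ℤ) * (k:ℝ)^2 := by
      have hsp := split_symm (2*n) (fun z : ℤ => p z * (z:ℝ)^2)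
        (by show p 0 * ((0:ℤ):ℝ)^2 = 0; rw [hp0]; ring)
        (fun z => by show p (-z) * ((-z:ℤ):ℝ)^2 = p z * (z:ℝ)^2; rw [← hsymm z]; push_cast; ring)
      push_cast at hsp ⊢
      rw [hsp]
    have hQ := weighted_sum_bound α hα0 hα2 p hnn C₀ hC₀ htail (2*n) (by omega)
    have hmono2 : ((2*n:ℕ):ℝ)^(2-α) ≤ b^(2-α) := by
      apply Real.rpow_le_rpow (by positivity) _ h2α.le
      rw [hbdef]; push_cast; linarith
    have hpow3 : b * b^(2-α) = b^3 * b^(-α) := by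
      have h1 : b * b^(2-α) = b^((1:ℝ)+(2-α)) := by
        rw [Real.rpow_add hbpos, Real.rpow_one]
      have h2 : b^(3:ℝ) * b^(-α) = b^((3:ℝ)+(-α)) := (Real.rpow_add hbpos _ _).symm
      have h3 : b^(3:ℕ) = b^(3:ℝ) := by
        rw [← Real.rpow_natCast b 3]; norm_num
      rw [h1, h3, h2]
      congr 1; ring
    have key1 : ∑ x ∈ Finset.Icc (-(n:ℤ)) n, ∑ y ∈ Finset.Icc (-(n:ℤ)) n,
        p (y - x) * ((y:ℝ)-(x:ℝ))^2 ≤ 16*C₀/(2-α) * (b^3 * b^(-α)) := by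
      calc ∑ x ∈ Finset.Icc (-(n:ℤ)) n, ∑ y ∈ Finset.Icc (-(n:ℤ)) n,
            p (y - x) * ((y:ℝ)-(x:ℝ))^2
          ≤ b * ∑ z ∈ Finset.Icc (-(2*n:ℤ)) (2*n), p z * (z:ℝ)^2 := by
            rw [hbdef]; exact ptot_le n p hnn
        _ = b * (2 * ∑ k ∈ Finset.Icc 1 (2*n), p (k:ℤ) * (k:ℝ)^2) := by rw [hW]
        _ ≤ b * (2 * (8*C₀/(2-α) * ((2*n:ℕ):ℝ)^(2-α))) := by
            apply mul_le_mul_of_nonneg_left _ hbpos.le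
            apply mul_le_mul_of_nonneg_left _ (by norm_num)
            exact_mod_cast hQ
        _ ≤ b * (2 * (8*C₀/(2-α) * b^(2-α))) := by
            apply mul_le_mul_of_nonneg_left _ hbpos.le
            apply mul_le_mul_of_nonneg_left _ (by norm_num)
            apply mul_le_mul_of_nonneg_left hmono2 (by positivity)
        _ = 16*C₀/(2-α) * (b * b^(2-α)) := by ring
        _ = 16*C₀/(2-α) * (b^3 * b^(-α)) := by rw [hpow3]
    have key2 : (2:ℝ)/81 * b^3 ≤ ∑ x ∈ Finset.Icc (-(n:ℤ)) n, (x:ℝ)^2 := by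
      have hb3 : b ≤ 3*(n:ℝ) := by rw [hbdef]; linarith
      have h27 : (3*(n:ℝ))^3 = 27*(n:ℝ)^3 := by ring
      have hbb := pow_le_pow_left₀ hbpos.le hb3 3
      linarith
    have main : (1/2) * ((Mcount n ℓ : ℝ) * (∑ x ∈ Finset.Icc (-(n:ℤ)) n,
          ∑ y ∈ Finset.Icc (-(n:ℤ)) n, p (y - x) * ((y:ℝ)-(x:ℝ))^2))
        ≤ 324 * C₀ / (2 - α) * b^(-α) * ((Mcount n ℓ : ℝ) *
          ∑ x ∈ Finset.Icc (-(n:ℤ)) n, (x:ℝ)^2) := by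
      calc (1/2) * ((Mcount n ℓ : ℝ) * (∑ x ∈ Finset.Icc (-(n:ℤ)) n,
            ∑ y ∈ Finset.Icc (-(n:ℤ)) n, p (y - x) * ((y:ℝ)-(x:ℝ))^2))
          ≤ (1/2) * ((Mcount n ℓ : ℝ) * (16*C₀/(2-α) * (b^3 * b^(-α)))) := by
            apply mul_le_mul_of_nonneg_left _ (by norm_num)
            exact mul_le_mul_of_nonneg_left key1 hMpos.le
        _ = 324 * C₀ / (2 - α) * b^(-α) * ((Mcount n ℓ : ℝ) * ((2:ℝ)/81 * b^3)) := by
            ring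
        _ ≤ 324 * C₀ / (2 - α) * b^(-α) * ((Mcount n ℓ : ℝ) *
              ∑ x ∈ Finset.Icc (-(n:ℤ)) n, (x:ℝ)^2) := by
            apply mul_le_mul_of_nonneg_left _ (by positivity)
            exact mul_le_mul_of_nonneg_left key2 hMpos.le
    refine le_trans (le_of_eq ?_) (le_trans main (le_of_eq ?_))
    · exact congrArg (fun t => (1/2) * t) (dirichlet_eq n ℓ hn p)
    · exact congrArg (fun t => 324 * C₀ / (2 - α) * b^(-α) * t) (variance_eq n ℓ hn).symm
end

section
/- Let K ≥ 1/2 be fixed. Then for any K-subpolynomial function φ : ℕ → [0,∞), one has φ(x) ≤ 2K φ(1) x^ν for every positive integer x, where ν = 1 + (log K)/(log 2). -/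
open Finset Filter Topology Real

/-- `φ : ℕ → [0,∞)` (defined on the positive integers) is `K`-subpolynomial if
`φ(x+y) ≤ K (φ(x) + φ(y))` for all positive `x, y`. -/
def IsSubpolynomial (K : ℝ) (φ : ℕ → ℝ) : Prop :=
  (∀ x : ℕ, 0 ≤ φ x) ∧ ∀ x y : ℕ, 1 ≤ x → 1 ≤ y → φ (x + y) ≤ K * (φ x + φ y)

lemma subpoly_pow_bound (K : ℝ) (hK : 1 / 2 ≤ K) (φ : ℕ → ℝ)
    (hφ : IsSubpolynomial K φ) :
    ∀ n : ℕ, ∀ x : ℕ, 1 ≤ x → x ≤ 2 ^ n → φ x ≤ (2 * K) ^ n * φ 1 := by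
  obtain ⟨hpos, hsub⟩ := hφ
  have hK0 : (0 : ℝ) < K := lt_of_lt_of_le (by norm_num) hK
  have h2K : (1 : ℝ) ≤ 2 * K := by linarith
  intro n
  induction n with
  | zero =>
    intro x hx1 hx2
    interval_cases x
    simp
  | succ n ih =>
    intro x hx1 hx2
    by_cases h : x ≤ 2 ^ n
    · calc φ x ≤ (2 * K) ^ n * φ 1 := ih x hx1 h
        _ ≤ (2 * K) ^ (n + 1) * φ 1 := by
          apply mul_le_mul_of_nonneg_right _ (hpos 1)
          exact pow_le_pow_right₀ h2K n.le_succ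
    · push_neg at h
      have ha1 : 1 ≤ x - 2 ^ n := by omega
      have hpn : (2:ℕ) ^ (n+1) = 2 ^ n + 2 ^ n := by ring
      have ha2 : x - 2 ^ n ≤ 2 ^ n := by omega
      have hb : 1 ≤ 2 ^ n := Nat.one_le_two_pow
      have hx : (x - 2 ^ n) + 2 ^ n = x := by omega
      calc φ x = φ ((x - 2 ^ n) + 2 ^ n) := by rw [hx]
        _ ≤ K * (φ (x - 2 ^ n) + φ (2 ^ n)) := hsub _ _ ha1 hb
        _ ≤ K * ((2 * K) ^ n * φ 1 + (2 * K) ^ n * φ 1) := by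
          apply mul_le_mul_of_nonneg_left _ hK0.le
          exact add_le_add (ih _ ha1 ha2) (ih _ hb le_rfl)
        _ = (2 * K) ^ (n + 1) * φ 1 := by ring

theorem subpolynomial_polynomial_bound
    (K : ℝ) (hK : 1 / 2 ≤ K) (φ : ℕ → ℝ) (hφ : IsSubpolynomial K φ) :
    ∀ x : ℕ, 1 ≤ x →
      φ x ≤ 2 * K * φ 1 * (x : ℝ) ^ (1 + Real.log K / Real.log 2) := by
  intro x hx
  set ν : ℝ := 1 + Real.log K / Real.log 2 with hν
  have hK0 : (0 : ℝ) < K := lt_of_lt_of_le (by norm_num) hK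
  have hlog2 : (0 : ℝ) < Real.log 2 := Real.log_pos (by norm_num)
  have hνnn : 0 ≤ ν := by
    have h1 : Real.log (1/2) ≤ Real.log K := Real.log_le_log (by norm_num) hK
    rw [show (1:ℝ)/2 = 2⁻¹ by norm_num, Real.log_inv] at h1
    rw [hν]
    have : (-1 : ℝ) ≤ Real.log K / Real.log 2 := by
      rw [le_div_iff₀ hlog2]; linarith
    linarith
  have h2ν : (2 : ℝ) ^ ν = 2 * K := by
    rw [hν, Real.rpow_add (by norm_num : (0:ℝ) < 2), Real.rpow_one]
    congr 1
    have : Real.log K / Real.log 2 = Real.logb 2 K := rfl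
    rw [this, Real.rpow_logb (by norm_num) (by norm_num) hK0]
  set n := Nat.clog 2 x with hn
  have hxn : x ≤ 2 ^ n := Nat.le_pow_clog one_lt_two x
  have h2n : (2 : ℕ) ^ n ≤ 2 * x := by
    rcases eq_or_lt_of_le hx with h1 | h1
    · simp [hn, ← h1]
    · have hn1 : 1 ≤ n := Nat.clog_pos one_lt_two (by omega)
      have := Nat.pow_pred_clog_lt_self one_lt_two h1
      rw [Nat.pred_eq_sub_one, ← hn] at this
      have hsplit : (2:ℕ) ^ n = 2 * 2 ^ (n - 1) := by
        rw [← pow_succ']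
        congr 1
        omega
      omega
  have hbound := subpoly_pow_bound K hK φ hφ n x hx hxn
  have hpos := hφ.1
  have key : ((2 * K : ℝ)) ^ n ≤ 2 * K * (x : ℝ) ^ ν := by
    have h1 : ((2 * K : ℝ)) ^ n = ((2 : ℝ) ^ (n : ℕ) : ℝ) ^ ν := by
      rw [← h2ν, ← Real.rpow_natCast ((2:ℝ)^ν) n, ← Real.rpow_natCast (2:ℝ) n,
        ← Real.rpow_mul (by norm_num), ← Real.rpow_mul (by norm_num), mul_comm]
    rw [h1]
    calc ((2 : ℝ) ^ (n : ℕ)) ^ ν ≤ ((2 * x : ℝ)) ^ ν := by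
          apply Real.rpow_le_rpow (by positivity) _ hνnn
          exact_mod_cast h2n
      _ = 2 * K * (x : ℝ) ^ ν := by
          rw [Real.mul_rpow (by norm_num) (by positivity), h2ν]
  calc φ x ≤ (2 * K) ^ n * φ 1 := hbound
    _ ≤ (2 * K * (x : ℝ) ^ ν) * φ 1 :=
        mul_le_mul_of_nonneg_right key (hpos 1)
    _ = 2 * K * φ 1 * (x : ℝ) ^ ν := by ring
end

section
/- Let α ∈ (0,2) and n ∈ ℕ. For every function f : Λ_n → ℝ with ∑_{x∈Λ_n} f(x) = 0, one has ∑_{x∈Λ_n} f(x)² ≤ ((2n+1)^α / 2) ∑_{x,y∈Λ_n, x≠y} |y-x|^{-(1+α)} (f(y) - f(x))². In particular, the spectral gap of the random walk on Λ_n with transition rate q(z) = |z|^{-(1+α)} is at least (1/2)(2n+1)^{-α}. -/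
open Finset

theorem spectral_gap_lower_bound_stable_rates
    (α : ℝ) (hα0 : 0 < α) (hα2 : α < 2) (n : ℕ) (hn : 1 ≤ n)
    (f : ℤ → ℝ) (hf : (∑ x ∈ Finset.Icc (-(n : ℤ)) n, f x) = 0) :
    ∑ x ∈ Finset.Icc (-(n : ℤ)) n, (f x) ^ 2 ≤
      ((2 * (n : ℝ) + 1) ^ α / 2) *
        ∑ x ∈ Finset.Icc (-(n : ℤ)) n, ∑ y ∈ Finset.Icc (-(n : ℤ)) n,
          if x = y then 0 else |(y : ℝ) - (x : ℝ)| ^ (-(1 + α)) * (f y - f x) ^ 2 := by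
  set s := Finset.Icc (-(n : ℤ)) n with hs
  set N : ℝ := 2 * (n : ℝ) + 1 with hN
  have hNpos : 0 < N := by positivity
  have hcard : (s.card : ℝ) = N := by
    rw [hs, Int.card_Icc]
    have h1 : ((n:ℤ) + 1 - (-(n:ℤ))).toNat = 2*n+1 := by omega
    rw [h1]; push_cast [hN]; ring
  set S := ∑ x ∈ s, (f x)^2 with hS
  have hSnn : 0 ≤ S := Finset.sum_nonneg fun x _ => sq_nonneg _
  have hsum : ∑ x ∈ s, ∑ y ∈ s, (f y - f x)^2 = 2 * N * S := by
    have h1 : ∀ x ∈ s, ∑ y ∈ s, (f y - f x)^2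
        = S + N * (f x)^2 - 2 * f x * (∑ y ∈ s, f y) := by
      intro x _
      have h2 : ∀ y ∈ s, (f y - f x)^2 = (f y)^2 + (f x)^2 - 2 * f x * f y := by
        intros; ring
      rw [Finset.sum_congr rfl h2, Finset.sum_sub_distrib, Finset.sum_add_distrib,
        Finset.sum_const, ← Finset.mul_sum, nsmul_eq_mul, hcard]
    rw [Finset.sum_congr rfl h1, hf]
    rw [Finset.sum_sub_distrib, Finset.sum_add_distrib, Finset.sum_const,
      ← Finset.mul_sum, nsmul_eq_mul, hcard]
    simp only [mul_zero, Finset.sum_const_zero, sub_zero]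
    ring
  have hpt : ∀ x ∈ s, ∀ y ∈ s,
      N ^ (-(1+α)) * (f y - f x)^2 ≤
        (if x = y then 0 else |(y:ℝ)-(x:ℝ)| ^ (-(1+α)) * (f y - f x)^2) := by
    intro x hx y hy
    by_cases h : x = y
    · simp [h]
    · simp only [h, if_false]
      apply mul_le_mul_of_nonneg_right _ (sq_nonneg _)
      have hxy : (y:ℝ) ≠ (x:ℝ) := by
        exact_mod_cast fun hc => h (by exact_mod_cast hc.symm)
      have habs : 0 < |(y:ℝ)-(x:ℝ)| := abs_pos.mpr (sub_ne_zero.mpr hxy)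
      have hxb := Finset.mem_Icc.mp hx
      have hyb := Finset.mem_Icc.mp hy
      have hxb1 : -(n:ℝ) ≤ (x:ℝ) := by exact_mod_cast hxb.1
      have hxb2 : (x:ℝ) ≤ n := by exact_mod_cast hxb.2
      have hyb1 : -(n:ℝ) ≤ (y:ℝ) := by exact_mod_cast hyb.1
      have hyb2 : (y:ℝ) ≤ n := by exact_mod_cast hyb.2
      have hle : |(y:ℝ)-(x:ℝ)| ≤ N := by
        rw [abs_le]
        constructor <;> [linarith; linarith]
      exact Real.rpow_le_rpow_of_nonpos habs hle (by linarith)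
  have hmain : N ^ (-(1+α)) * (2 * N * S) ≤
      ∑ x ∈ s, ∑ y ∈ s,
        (if x = y then 0 else |(y:ℝ)-(x:ℝ)| ^ (-(1+α)) * (f y - f x)^2) := by
    rw [← hsum, Finset.mul_sum]
    apply Finset.sum_le_sum
    intro x hx
    rw [Finset.mul_sum]
    exact Finset.sum_le_sum fun y hy => hpt x hx y hy
  have hId : S = (N ^ α / 2) * (N ^ (-(1+α)) * (2 * N * S)) := by
    have h1 : N ^ α * N ^ (-(1+α)) = N ^ (-(1:ℝ)) := by
      rw [← Real.rpow_add hNpos]; ring_nf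
    have h2 : N ^ (-(1:ℝ)) = N⁻¹ := by
      rw [Real.rpow_neg_one]
    have : (N ^ α / 2) * (N ^ (-(1+α)) * (2 * N * S))
        = (N ^ α * N ^ (-(1+α))) * (N * S) := by ring
    rw [this, h1, h2]
    field_simp
  calc S = (N ^ α / 2) * (N ^ (-(1+α)) * (2 * N * S)) := hId
    _ ≤ (N ^ α / 2) * ∑ x ∈ s, ∑ y ∈ s,
        (if x = y then 0 else |(y:ℝ)-(x:ℝ)| ^ (-(1+α)) * (f y - f x)^2) := by
        apply mul_le_mul_of_nonneg_left hmain (by positivity)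
end

section
/- Let n ∈ ℕ and f : Λ_n → ℝ. Define φ : ℕ → [0,∞) by φ(k) = ∑_{x=-n}^{n-k} (f(x+k) - f(x))² for 1 ≤ k ≤ 2n, and φ(k) = 0 for k > 2n. Then φ is 2-subpolynomial, i.e. φ(k+j) ≤ 2(φ(k) + φ(j)) for all positive integers k, j. -/
open Finset

theorem increment_function_is_two_subpolynomial
    (n : ℕ) (hn : 1 ≤ n) (f : ℤ → ℝ)
    (φ : ℕ → ℝ)
    (hφ : ∀ k : ℕ, φ k = ∑ x ∈ Finset.Icc (-(n : ℤ)) ((n : ℤ) - k),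
      (f (x + k) - f x) ^ 2) :
    ∀ k j : ℕ, 1 ≤ k → 1 ≤ j → φ (k + j) ≤ 2 * (φ k + φ j) := by
  intro k j hk hj
  rw [hφ, hφ, hφ]
  have key : ∀ x : ℤ, (f (x + (k + j : ℕ)) - f x) ^ 2 ≤
      2 * (f (x + (j : ℤ) + k) - f (x + j)) ^ 2 + 2 * (f (x + j) - f x) ^ 2 := by
    intro x
    have hxx : (x + (k + j : ℕ) : ℤ) = x + (j : ℤ) + k := by push_cast; ring
    rw [hxx]
    nlinarith [sq_nonneg ((f (x + (j : ℤ) + k) - f (x + j)) - (f (x + j) - f x))]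
  calc (∑ x ∈ Finset.Icc (-(n : ℤ)) ((n : ℤ) - (k + j : ℕ)), (f (x + (k + j : ℕ)) - f x) ^ 2)
      ≤ ∑ x ∈ Finset.Icc (-(n : ℤ)) ((n : ℤ) - (k + j : ℕ)),
        (2 * (f (x + (j : ℤ) + k) - f (x + j)) ^ 2 + 2 * (f (x + j) - f x) ^ 2) :=
        Finset.sum_le_sum (fun x _ => key x)
    _ = 2 * (∑ x ∈ Finset.Icc (-(n : ℤ)) ((n : ℤ) - (k + j : ℕ)),
          (f (x + (j : ℤ) + k) - f (x + j)) ^ 2)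
        + 2 * (∑ x ∈ Finset.Icc (-(n : ℤ)) ((n : ℤ) - (k + j : ℕ)),
          (f (x + j) - f x) ^ 2) := by
        rw [Finset.sum_add_distrib, Finset.mul_sum, Finset.mul_sum]
    _ ≤ 2 * (∑ x ∈ Finset.Icc (-(n : ℤ)) ((n : ℤ) - k), (f (x + k) - f x) ^ 2)
        + 2 * (∑ x ∈ Finset.Icc (-(n : ℤ)) ((n : ℤ) - j), (f (x + j) - f x) ^ 2) := by
        gcongr 2 * ?_ + 2 * ?_
        · have hre : (∑ x ∈ Finset.Icc (-(n : ℤ)) ((n : ℤ) - (k + j : ℕ)),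
              (f (x + (j : ℤ) + k) - f (x + j)) ^ 2)
              = ∑ y ∈ Finset.Icc (-(n : ℤ) + j) ((n : ℤ) - (k + j : ℕ) + j),
                (f (y + k) - f y) ^ 2 := by
            rw [← Finset.map_add_right_Icc, Finset.sum_map]
            rfl
          rw [hre]
          apply Finset.sum_le_sum_of_subset_of_nonneg
          · apply Finset.Icc_subset_Icc
            · linarith [(by exact_mod_cast hj : (1:ℤ) ≤ j)]
            · push_cast; linarith
          · intro x _ _; positivity
        · apply Finset.sum_le_sum_of_subset_of_nonneg
          · apply Finset.Icc_subset_Icc le_rfl (by push_cast; linarith [(by exact_mod_cast hk : (1:ℤ) ≤ k)])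
          · intro x _ _; positivity
    _ = 2 * ((∑ x ∈ Finset.Icc (-(n : ℤ)) ((n : ℤ) - k), (f (x + k) - f x) ^ 2)
        + ∑ x ∈ Finset.Icc (-(n : ℤ)) ((n : ℤ) - j), (f (x + j) - f x) ^ 2) := by ring
end
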